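/- Let Φ : ℝ^p × ℝ^n → ℝ^n be differentiable, let x* : ℝ^p → ℝ^n be a differentiable map satisfying x*(θ) = Φ(θ, x*(θ)) for all θ, and let L : ℝ^n → ℝ be differentiable. Fix θ and set J := D₂Φ(θ, x*(θ)). If I − J is invertible, then the composed loss θ ↦ L(x*(θ)) is differentiable at θ with derivative D_θ (L ∘ x*)(θ) = DL(x*(θ)) ∘ (I − J)⁻¹ ∘ D₁Φ(θ, x*(θ)). -/

import Mathlib

open scoped Topology

/-- **Gradient of the implicit differentiation method (Theorem 2).**
If `Φ : ℝ^p × ℝ^n → ℝ^n` is differentiable, `xs : ℝ^p → ℝ^n` is differentiable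
and satisfies `xs θ = Φ (θ, xs θ)` for all `θ`, and `L : ℝ^n → ℝ` is
differentiable, then at a fixed `θ` where `I - J` with `J = D₂Φ(θ, xs θ)` is
invertible, the composed loss `θ ↦ L (xs θ)` is differentiable with derivative
`DL(xs θ) ∘ (I - J)⁻¹ ∘ D₁Φ(θ, xs θ)`. -/
theorem implicit_loss_fderiv {p n : ℕ}
    (Φ : (EuclideanSpace ℝ (Fin p)) × (EuclideanSpace ℝ (Fin n)) → EuclideanSpace ℝ (Fin n))
    (hΦ : Differentiable ℝ Φ)
    (xs : EuclideanSpace ℝ (Fin p) → EuclideanSpace ℝ (Fin n))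
    (hxs : Differentiable ℝ xs)
    (hfix : ∀ θ, xs θ = Φ (θ, xs θ))
    (L : EuclideanSpace ℝ (Fin n) → ℝ)
    (hL : Differentiable ℝ L)
    (θ : EuclideanSpace ℝ (Fin p))
    (hinv : IsUnit (ContinuousLinearMap.id ℝ (EuclideanSpace ℝ (Fin n)) -
      fderiv ℝ (fun y => Φ (θ, y)) (xs θ))) :
    DifferentiableAt ℝ (fun t => L (xs t)) θ ∧
    fderiv ℝ (fun t => L (xs t)) θ =
      (fderiv ℝ L (xs θ)).comp
        ((Ring.inverse (ContinuousLinearMap.id ℝ (EuclideanSpace ℝ (Fin n)) -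
          fderiv ℝ (fun y => Φ (θ, y)) (xs θ))).comp
          (fderiv ℝ (fun t => Φ (t, xs θ)) θ)) := by
  classical
  have hD : HasFDerivAt Φ (fderiv ℝ Φ (θ, xs θ)) (θ, xs θ) :=
    (hΦ (θ, xs θ)).hasFDerivAt
  set D := fderiv ℝ Φ (θ, xs θ) with hDdef
  have h2 : HasFDerivAt (fun y => Φ (θ, y))
      (D.comp (ContinuousLinearMap.inr ℝ (EuclideanSpace ℝ (Fin p)) (EuclideanSpace ℝ (Fin n))))
      (xs θ) := by
    have : HasFDerivAt (fun y : EuclideanSpace ℝ (Fin n) => (θ, y))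
        ((0 : EuclideanSpace ℝ (Fin n) →L[ℝ] EuclideanSpace ℝ (Fin p)).prod
          (ContinuousLinearMap.id ℝ (EuclideanSpace ℝ (Fin n)))) (xs θ) :=
      HasFDerivAt.prodMk (hasFDerivAt_const θ (xs θ)) (hasFDerivAt_id (xs θ))
    exact hD.comp (xs θ) this
  have h1 : HasFDerivAt (fun t => Φ (t, xs θ))
      (D.comp (ContinuousLinearMap.inl ℝ (EuclideanSpace ℝ (Fin p)) (EuclideanSpace ℝ (Fin n))))
      θ := by
    have : HasFDerivAt (fun t : EuclideanSpace ℝ (Fin p) => (t, xs θ))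
        ((ContinuousLinearMap.id ℝ (EuclideanSpace ℝ (Fin p))).prod
          (0 : EuclideanSpace ℝ (Fin p) →L[ℝ] EuclideanSpace ℝ (Fin n))) θ :=
      HasFDerivAt.prodMk (hasFDerivAt_id θ) (hasFDerivAt_const (xs θ) θ)
    exact hD.comp θ this
  set X := fderiv ℝ xs θ with hXdef
  have hXd : HasFDerivAt xs X θ := (hxs θ).hasFDerivAt
  have h3 : HasFDerivAt (fun t => Φ (t, xs t))
      (D.comp ((ContinuousLinearMap.id ℝ (EuclideanSpace ℝ (Fin p))).prod X)) θ :=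
    hD.comp θ (HasFDerivAt.prodMk (hasFDerivAt_id θ) hXd)
  have hfun : (fun t => Φ (t, xs t)) = xs := by
    funext t; exact (hfix t).symm
  rw [hfun] at h3
  have hXeq : X = D.comp ((ContinuousLinearMap.id ℝ (EuclideanSpace ℝ (Fin p))).prod X) :=
    hXd.unique h3
  set J := fderiv ℝ (fun y => Φ (θ, y)) (xs θ) with hJdef
  have hJ : J = D.comp (ContinuousLinearMap.inr ℝ _ _) := h2.fderiv
  set D1 := fderiv ℝ (fun t => Φ (t, xs θ)) θ with hD1def
  have hD1 : D1 = D.comp (ContinuousLinearMap.inl ℝ _ _) := h1.fderiv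
  have hsplit : X = D1 + J.comp X := by
    rw [hD1, hJ]
    ext v i
    conv_lhs => rw [hXeq]
    simp only [ContinuousLinearMap.comp_apply, ContinuousLinearMap.prod_apply,
      ContinuousLinearMap.add_apply, ContinuousLinearMap.inl_apply,
      ContinuousLinearMap.inr_apply, ContinuousLinearMap.coe_id', id_eq]
    have : ((v, X v) : (EuclideanSpace ℝ (Fin p)) × (EuclideanSpace ℝ (Fin n)))
        = (v, 0) + (0, X v) := by simp
    rw [this, D.map_add]
  set A := ContinuousLinearMap.id ℝ (EuclideanSpace ℝ (Fin n)) - J with hAdef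
  have hAX : A.comp X = D1 := by
    have h : A.comp X = X - J.comp X := by
      ext v; simp [hAdef, ContinuousLinearMap.sub_comp]
    rw [h]
    exact (eq_sub_iff_add_eq.mpr hsplit.symm).symm
  have hXsolve : X = (Ring.inverse A).comp D1 := by
    obtain ⟨u, hu⟩ := hinv
    have hRu : Ring.inverse A = (↑u⁻¹ : _ →L[ℝ] _) := by
      rw [← hu]; exact Ring.inverse_unit u
    rw [← hAX, hRu]
    refine ContinuousLinearMap.ext fun v => ?_
    rw [ContinuousLinearMap.comp_apply, ContinuousLinearMap.comp_apply, ← hu,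
      ← ContinuousLinearMap.mul_apply, u.inv_mul, ContinuousLinearMap.one_apply]
  have hcomp : HasFDerivAt (fun t => L (xs t)) ((fderiv ℝ L (xs θ)).comp X) θ :=
    (hL (xs θ)).hasFDerivAt.comp θ hXd
  exact ⟨hcomp.differentiableAt, by rw [hcomp.fderiv, hXsolve]⟩
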